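/- Deviation is subadditive under composition of approximate encoded permutations: Dev(P₀ ∘ P₁) ≤ Dev(P₀) + Dev(P₁). -/

import Mathlib

/-- The deviation of an approximate encoded permutation with unencoded permutation `u`,
encoded permutation `v`, and encoder `f` (restricted to unleaked inputs `G × C`):
the maximum over inputs `g` of the fraction of coset values `c` for which `v (f (g, c))`
is not an encoding of `u g`. -/
noncomputable def dev {G E C : Type*} [Fintype G] [Fintype C] [DecidableEq E]
    (u : G → G) (v : E → E) (f : G × C → E) : ℝ :=
  ⨆ g : G,
    ((Finset.univ.filter fun c : C => ∀ c' : C, v (f (g, c)) ≠ f (u g, c')).card : ℝ) /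
      (Fintype.card C)

/-- **Deviation is subadditive under composition**: for approximate encoded permutations
`P₀ = (G, u₀, E, v₀, C, L, f)` and `P₁ = (G, u₁, E, v₁, C, L, f)` over identical sets,
`Dev(P₀ ∘ P₁) ≤ Dev(P₀) + Dev(P₁)`. -/
theorem dev_comp_subadditive {G E C L : Type*} [Fintype G] [Fintype C] [DecidableEq E]
    [Nonempty G] [Nonempty C]
    (u₀ u₁ : Equiv.Perm G) (v₀ v₁ : Equiv.Perm E) (f : (G × C) ⊕ L ≃ E) :
    dev (⇑u₀ ∘ ⇑u₁) (⇑v₀ ∘ ⇑v₁) (fun gc => f (Sum.inl gc)) ≤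
      dev ⇑u₀ ⇑v₀ (fun gc => f (Sum.inl gc)) + dev ⇑u₁ ⇑v₁ (fun gc => f (Sum.inl gc)) := by
  classical
  set F : G × C → E := fun gc => f (Sum.inl gc) with hF
  have hFinj : Function.Injective F := by
    intro a b h
    exact Sum.inl_injective (f.injective h)
  have hbdd0 : BddAbove (Set.range fun g : G =>
      ((Finset.univ.filter fun c : C => ∀ c' : C,
        v₀ (F (g, c)) ≠ F (u₀ g, c')).card : ℝ) / Fintype.card C) :=
    Finite.bddAbove_range _
  have hbdd1 : BddAbove (Set.range fun g : G =>
      ((Finset.univ.filter fun c : C => ∀ c' : C,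
        v₁ (F (g, c)) ≠ F (u₁ g, c')).card : ℝ) / Fintype.card C) :=
    Finite.bddAbove_range _
  apply ciSup_le
  intro g
  have h0 : ((Finset.univ.filter fun c : C => ∀ c' : C,
      v₀ (F (u₁ g, c)) ≠ F (u₀ (u₁ g), c')).card : ℝ) / Fintype.card C ≤
      dev ⇑u₀ ⇑v₀ F := le_ciSup hbdd0 (u₁ g)
  have h1 : ((Finset.univ.filter fun c : C => ∀ c' : C,
      v₁ (F (g, c)) ≠ F (u₁ g, c')).card : ℝ) / Fintype.card C ≤
      dev ⇑u₁ ⇑v₁ F := le_ciSup hbdd1 g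
  refine le_trans ?_ (add_le_add h0 h1)
  rw [← add_div]
  set B : Finset C := Finset.univ.filter fun c : C =>
    ∀ c' : C, (⇑v₀ ∘ ⇑v₁) (F (g, c)) ≠ F ((⇑u₀ ∘ ⇑u₁) g, c') with hB
  set B0 : Finset C := Finset.univ.filter fun c : C =>
    ∀ c' : C, v₀ (F (u₁ g, c)) ≠ F (u₀ (u₁ g), c') with hB0
  set B1 : Finset C := Finset.univ.filter fun c : C =>
    ∀ c' : C, v₁ (F (g, c)) ≠ F (u₁ g, c') with hB1
  have hcard : B.card ≤ B0.card + B1.card := by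
    have hsub : B ⊆ (B \ B1) ∪ B1 := by
      intro c hc
      by_cases h : c ∈ B1
      · exact Finset.mem_union_right _ h
      · exact Finset.mem_union_left _ (Finset.mem_sdiff.mpr ⟨hc, h⟩)
    refine le_trans (Finset.card_le_card hsub) (le_trans (Finset.card_union_le _ _) ?_)
    have hle : (B \ B1).card ≤ B0.card := by
      set φ : C → C := fun c =>
        if h : ∃ c' : C, v₁ (F (g, c)) = F (u₁ g, c') then h.choose
        else Classical.arbitrary C with hφ
      apply Finset.card_le_card_of_injOn φ
      · intro c hc
        rw [Finset.mem_coe, Finset.mem_sdiff] at hc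
        obtain ⟨hcB, hcB1⟩ := hc
        have hex : ∃ c' : C, v₁ (F (g, c)) = F (u₁ g, c') := by
          simp only [hB1, Finset.mem_filter, Finset.mem_univ, true_and, not_forall,
            not_not] at hcB1
          exact hcB1
        have hspec : v₁ (F (g, c)) = F (u₁ g, φ c) := by
          simp only [hφ, dif_pos hex]
          exact hex.choose_spec
        simp only [hB0, Finset.mem_coe, Finset.mem_filter, Finset.mem_univ, true_and]
        intro c'' heq
        simp only [hB, Finset.mem_filter, Finset.mem_univ, true_and] at hcB
        exact hcB c'' (by simp only [Function.comp_apply, hspec, heq])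
      · intro c₁ h₁ c₂ h₂ heq
        rw [Finset.coe_sdiff] at h₁ h₂
        have hex₁ : ∃ c' : C, v₁ (F (g, c₁)) = F (u₁ g, c') := by
          have := h₁.2
          simp only [hB1, Finset.coe_filter, Set.mem_setOf_eq, Finset.mem_univ, true_and,
            not_forall, not_not] at this
          exact this
        have hex₂ : ∃ c' : C, v₁ (F (g, c₂)) = F (u₁ g, c') := by
          have := h₂.2
          simp only [hB1, Finset.coe_filter, Set.mem_setOf_eq, Finset.mem_univ, true_and,
            not_forall, not_not] at this
          exact this
        have hs₁ : v₁ (F (g, c₁)) = F (u₁ g, φ c₁) := by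
          simp only [hφ, dif_pos hex₁]; exact hex₁.choose_spec
        have hs₂ : v₁ (F (g, c₂)) = F (u₁ g, φ c₂) := by
          simp only [hφ, dif_pos hex₂]; exact hex₂.choose_spec
        have : F (g, c₁) = F (g, c₂) := v₁.injective (by rw [hs₁, hs₂, heq])
        exact (Prod.mk.injEq .. ▸ hFinj this).2
    omega
  have hCpos : (0:ℝ) < Fintype.card C := by
    exact_mod_cast Fintype.card_pos
  gcongr
  exact_mod_cast hcard
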